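/- Let d ≥ 1, k ≥ 1, and let F be a connected simple graph with vertex set {0, 1, …, k}. Let h : ℝ^d → [0,1] be measurable with h(−x) = h(x) for all x and ∫_{ℝ^d} h(x) dx < ∞. Then for every fixed x_0 ∈ ℝ^d, ∫_{(ℝ^d)^k} ∏_{{i,j} ∈ E(F)} h(x_i − x_j) dx_1 ⋯ dx_k ≤ (∫_{ℝ^d} h(x) dx)^k, where the integral is with respect to Lebesgue measure on (ℝ^d)^k. -/

import Mathlib

open MeasureTheory Finset

lemma exists_adj_dist_lt {V : Type*} (G : SimpleGraph V) (hG : G.Connected) (r v : V)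
    (hv : v ≠ r) : ∃ u, G.Adj u v ∧ G.dist r u < G.dist r v := by
  obtain ⟨pw, hpw⟩ := (hG r v).exists_walk_length_eq_dist
  have hpwr : pw.reverse.length = G.dist r v := by
    rw [SimpleGraph.Walk.length_reverse]; exact hpw
  cases hrev : pw.reverse with
  | nil => exact absurd rfl hv
  | cons hadj r' =>
      rename_i u'
      refine ⟨u', hadj.symm, ?_⟩
      have hle : G.dist r u' ≤ r'.length := by
        have := G.dist_le r'.reverse
        rwa [SimpleGraph.Walk.length_reverse] at this
      have : r'.length + 1 = G.dist r v := by
        rw [← hpwr, hrev, SimpleGraph.Walk.length_cons]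
      omega

lemma exists_good_enum {k : ℕ} (F : SimpleGraph (Fin (k+1))) (hF : F.Connected) :
    ∃ e : Equiv.Perm (Fin (k+1)), e 0 = 0 ∧
      ∀ i : Fin (k+1), i ≠ 0 → ∃ j, j < i ∧ F.Adj (e j) (e i) := by
  classical
  set key : Fin (k+1) → ℕ ×ₗ Fin (k+1) := fun v => toLex (F.dist 0 v, v) with hkeydef
  have keyinj : Function.Injective key := by
    intro a b hab
    have := congrArg (fun x => (ofLex x).2) hab
    simpa [hkeydef] using this
  have keybot : ∀ v, key 0 ≤ key v := by
    intro v
    have h0 : key 0 = toLex ((0 : ℕ), (0 : Fin (k+1))) := by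
      simp [hkeydef, SimpleGraph.dist_self]
    rw [h0, hkeydef]
    rcases Nat.eq_zero_or_pos (F.dist 0 v) with hd | hd
    · exact Prod.Lex.le_iff.mpr (Or.inr ⟨hd.symm, Fin.zero_le _⟩)
    · exact Prod.Lex.le_iff.mpr (Or.inl hd)
  set e := Tuple.sort key with he
  have mono : Monotone (key ∘ e) := Tuple.monotone_sort key
  have strict : StrictMono (key ∘ e) :=
    mono.strictMono_of_injective (keyinj.comp e.injective)
  have he0 : e 0 = 0 := by
    have h1 : key (e 0) ≤ key (e (e.symm 0)) := mono (Fin.zero_le _)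
    rw [Equiv.apply_symm_apply] at h1
    exact keyinj (le_antisymm h1 (keybot _))
  refine ⟨e, he0, ?_⟩
  intro i hi
  have hv : e i ≠ 0 := by
    intro hc
    exact hi (e.injective (hc.trans he0.symm))
  obtain ⟨u, hadj, hdlt⟩ := exists_adj_dist_lt F hF 0 (e i) hv
  refine ⟨e.symm u, ?_, ?_⟩
  · have : key (e (e.symm u)) < key (e i) := by
      rw [Equiv.apply_symm_apply]
      exact Prod.Lex.lt_iff.mpr (Or.inl hdlt)
    exact strict.lt_iff_lt.mp this
  · rw [Equiv.apply_symm_apply]; exact hadj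

lemma measurable_cons_apply {d m : ℕ} (x₀ : Fin d → ℝ) (j : Fin (m+1)) :
    Measurable (fun v : Fin m → Fin d → ℝ => (Fin.cons x₀ v : Fin (m+1) → Fin d → ℝ) j) := by
  refine Fin.cases ?_ ?_ j
  · simpa using measurable_const
  · intro j; simpa using measurable_pi_apply j

lemma tree_bound {d : ℕ} (H : (Fin d → ℝ) → ENNReal) (Hmeas : Measurable H)
    (H1 : ∀ x, H x ≤ 1) (Heven : ∀ x, H (-x) = H x) :
    ∀ (n : ℕ) (p : Fin (n + 1) → Fin (n + 1)), (∀ i, i ≠ 0 → p i < i) →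
      ∀ (x₀ : Fin d → ℝ),
      (∫⁻ y : Fin n → Fin d → ℝ,
          ∏ i ∈ Finset.univ.filter (fun i => i ≠ (0 : Fin (n + 1))),
            H ((Fin.cons x₀ y : Fin (n+1) → Fin d → ℝ) (p i)
                - (Fin.cons x₀ y : Fin (n+1) → Fin d → ℝ) i))
        ≤ (∫⁻ x, H x) ^ n := by
  intro n
  induction n with
  | zero =>
      intro p hp x₀
      have hfilt : Finset.univ.filter (fun i => i ≠ (0 : Fin 1)) = ∅ := by
        decide
      simp only [hfilt, Finset.prod_empty, pow_zero]
      rw [lintegral_one]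
      rw [MeasureTheory.volume_pi, Measure.pi_univ]
      simp
  | succ n IH =>
      intro p hp x₀
      -- definitions
      have hlastne : (Fin.last (n+1)) ≠ (0 : Fin (n+2)) := by
        simp [Fin.ext_iff]
      have hlastlt : (p (Fin.last (n+1))).val < n + 1 := by
        have := hp (Fin.last (n+1)) hlastne
        simpa [Fin.lt_def] using this
      set q : Fin (n+1) := ⟨(p (Fin.last (n+1))).val, hlastlt⟩ with hqdef
      have hq : Fin.castSucc q = p (Fin.last (n+1)) := by
        ext; simp [hqdef]
      have hplt : ∀ i : Fin (n+1), i ≠ 0 → (p i.castSucc).val < n + 1 := by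
        intro i hi
        have h1 : i.castSucc ≠ 0 := by
          exact Fin.castSucc_ne_zero_iff.mpr hi
        have := hp i.castSucc h1
        rw [Fin.lt_def] at this
        have h2 : (i.castSucc : Fin (n+2)).val = i.val := rfl
        omega
      classical
      set p' : Fin (n+1) → Fin (n+1) := fun i =>
        if hi : i = 0 then 0 else ⟨(p i.castSucc).val, hplt i hi⟩ with hp'def
      have hp' : ∀ i, i ≠ 0 → p' i < i := by
        intro i hi
        have h1 : i.castSucc ≠ 0 := by exact Fin.castSucc_ne_zero_iff.mpr hi
        have := hp i.castSucc h1
        rw [Fin.lt_def] at this ⊢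
        simp [hp'def, dif_neg hi]
        exact this
      have hp'cast : ∀ i : Fin (n+1), i ≠ 0 → Fin.castSucc (p' i) = p i.castSucc := by
        intro i hi
        ext
        simp [hp'def, dif_neg hi]
      -- the cons/snoc compatibility
      have hCC : ∀ (z : Fin d → ℝ) (w : Fin n → Fin d → ℝ) (j : Fin (n+1)),
          (Fin.cons x₀ (Fin.snoc w z) : Fin (n+2) → Fin d → ℝ) (Fin.castSucc j)
            = (Fin.cons x₀ w : Fin (n+1) → Fin d → ℝ) j := by
        intro z w j
        refine Fin.cases ?_ ?_ j
        · simp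
        · intro j
          rw [← Fin.succ_castSucc, Fin.cons_succ, Fin.cons_succ, Fin.snoc_castSucc]
      have hClast : ∀ (z : Fin d → ℝ) (w : Fin n → Fin d → ℝ),
          (Fin.cons x₀ (Fin.snoc w z) : Fin (n+2) → Fin d → ℝ) (Fin.last (n+1)) = z := by
        intro z w
        rw [← Fin.succ_last, Fin.cons_succ, Fin.snoc_last]
      -- pointwise key identity
      have key : ∀ (z : Fin d → ℝ) (w : Fin n → Fin d → ℝ),
          (∏ i ∈ Finset.univ.filter (fun i => i ≠ (0 : Fin (n + 2))),
            H ((Fin.cons x₀ (Fin.snoc w z) : Fin (n+2) → Fin d → ℝ) (p i)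
                - (Fin.cons x₀ (Fin.snoc w z) : Fin (n+2) → Fin d → ℝ) i))
          = (∏ i ∈ Finset.univ.filter (fun i => i ≠ (0 : Fin (n + 1))),
              H ((Fin.cons x₀ w : Fin (n+1) → Fin d → ℝ) (p' i)
                  - (Fin.cons x₀ w : Fin (n+1) → Fin d → ℝ) i))
            * H ((Fin.cons x₀ w : Fin (n+1) → Fin d → ℝ) q - z) := by
        intro z w
        rw [Finset.prod_filter, Finset.prod_filter, Fin.prod_univ_castSucc]
        congr 1
        · refine Finset.prod_congr rfl ?_
          intro i _
          by_cases hi : i = 0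
          · simp [hi]
          · have h1 : i.castSucc ≠ (0 : Fin (n+2)) := by exact Fin.castSucc_ne_zero_iff.mpr hi
            rw [if_pos h1, if_pos hi, ← hp'cast i hi, hCC, hCC]
        · rw [if_pos hlastne, ← hq, hCC, hClast]
      -- measurability of the full integrand
      have fmeas : Measurable (fun y : Fin (n+1) → Fin d → ℝ =>
          ∏ i ∈ Finset.univ.filter (fun i => i ≠ (0 : Fin (n + 2))),
            H ((Fin.cons x₀ y : Fin (n+2) → Fin d → ℝ) (p i)
                - (Fin.cons x₀ y : Fin (n+2) → Fin d → ℝ) i)) := by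
        refine Finset.measurable_prod _ ?_
        intro i _
        exact Hmeas.comp ((measurable_cons_apply x₀ (p i)).sub (measurable_cons_apply x₀ i))
      have g'meas : Measurable (fun w : Fin n → Fin d → ℝ =>
          ∏ i ∈ Finset.univ.filter (fun i => i ≠ (0 : Fin (n + 1))),
            H ((Fin.cons x₀ w : Fin (n+1) → Fin d → ℝ) (p' i)
                - (Fin.cons x₀ w : Fin (n+1) → Fin d → ℝ) i)) := by
        refine Finset.measurable_prod _ ?_
        intro i _
        exact Hmeas.comp ((measurable_cons_apply x₀ (p' i)).sub (measurable_cons_apply x₀ i))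
      set E := MeasurableEquiv.piFinSuccAbove (fun _ : Fin (n+1) => (Fin d → ℝ)) (Fin.last n)
        with hEdef
      have hEsymm : ∀ (z : Fin d → ℝ) (w : Fin n → Fin d → ℝ),
          E.symm (z, w) = Fin.snoc w z := by
        intro z w
        rw [hEdef]
        simp [MeasurableEquiv.piFinSuccAbove, Fin.snocEquiv]
      calc
        (∫⁻ y : Fin (n+1) → Fin d → ℝ,
            ∏ i ∈ Finset.univ.filter (fun i => i ≠ (0 : Fin (n + 2))),
              H ((Fin.cons x₀ y : Fin (n+2) → Fin d → ℝ) (p i)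
                  - (Fin.cons x₀ y : Fin (n+2) → Fin d → ℝ) i))
            = ∫⁻ zw : (Fin d → ℝ) × (Fin n → Fin d → ℝ),
                (fun y => ∏ i ∈ Finset.univ.filter (fun i => i ≠ (0 : Fin (n + 2))),
                  H ((Fin.cons x₀ y : Fin (n+2) → Fin d → ℝ) (p i)
                      - (Fin.cons x₀ y : Fin (n+2) → Fin d → ℝ) i)) (E.symm zw) := by
              rw [((volume_preserving_piFinSuccAbove
                (fun _ : Fin (n+1) => (Fin d → ℝ)) (Fin.last n)).symm E).lintegral_comp fmeas]
        _ = ∫⁻ w : Fin n → Fin d → ℝ, ∫⁻ z : Fin d → ℝ,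
              (∏ i ∈ Finset.univ.filter (fun i => i ≠ (0 : Fin (n + 1))),
                H ((Fin.cons x₀ w : Fin (n+1) → Fin d → ℝ) (p' i)
                    - (Fin.cons x₀ w : Fin (n+1) → Fin d → ℝ) i))
              * H ((Fin.cons x₀ w : Fin (n+1) → Fin d → ℝ) q - z) := by
              rw [MeasureTheory.Measure.volume_eq_prod]
              beta_reduce
              have hmeas2 : Measurable (fun zw : (Fin d → ℝ) × (Fin n → Fin d → ℝ) =>
                  ∏ i ∈ Finset.univ.filter (fun i => i ≠ (0 : Fin (n + 2))),
                    H ((Fin.cons x₀ (E.symm zw) : Fin (n+2) → Fin d → ℝ) (p i)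
                        - (Fin.cons x₀ (E.symm zw) : Fin (n+2) → Fin d → ℝ) i)) :=
                fmeas.comp E.symm.measurable
              rw [lintegral_prod_symm' _ hmeas2]
              congr 1
              ext w
              congr 1
              ext z
              rw [hEsymm z w, key z w]
        _ = ∫⁻ w : Fin n → Fin d → ℝ,
              (∏ i ∈ Finset.univ.filter (fun i => i ≠ (0 : Fin (n + 1))),
                H ((Fin.cons x₀ w : Fin (n+1) → Fin d → ℝ) (p' i)
                    - (Fin.cons x₀ w : Fin (n+1) → Fin d → ℝ) i)) * ∫⁻ x, H x := by
              congr 1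
              ext w
              have hm : Measurable (fun z : Fin d → ℝ =>
                  H ((Fin.cons x₀ w : Fin (n+1) → Fin d → ℝ) q - z)) :=
                Hmeas.comp (measurable_const.sub measurable_id)
              rw [lintegral_const_mul _ hm]
              congr 1
              have : ∀ z : Fin d → ℝ,
                  H ((Fin.cons x₀ w : Fin (n+1) → Fin d → ℝ) q - z)
                  = H (z - (Fin.cons x₀ w : Fin (n+1) → Fin d → ℝ) q) := by
                intro z
                rw [← Heven (z - _), neg_sub]
              simp_rw [this]
              exact lintegral_sub_right_eq_self H _
        _ ≤ (∫⁻ x, H x) ^ n * ∫⁻ x, H x := by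
              rw [lintegral_mul_const _ g'meas]
              exact mul_le_mul_left (IH p' hp' x₀) _
        _ = (∫⁻ x, H x) ^ (n + 1) := (pow_succ _ _).symm

/-- Let `F` be a connected simple graph on vertex set `{0, 1, …, k}` and let
`h : ℝ^d → [0,1]` be an even measurable integrable function. Then for every fixed
`x₀ ∈ ℝ^d`,
`∫_{(ℝ^d)^k} ∏_{{i,j} ∈ E(F)} h(x_i − x_j) dx_1 ⋯ dx_k ≤ (∫_{ℝ^d} h)^k`,
where the product runs over the edges of `F` (each edge taken with orientation `i < j`,
which is immaterial since `h` is even), and `x : Fin (k+1) → ℝ^d` is given by `x 0 = x₀`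
and `x i = y i` for the integration variables `y`. -/
theorem statement16 (d k : ℕ) (hd : 1 ≤ d) (hk : 1 ≤ k)
    (F : SimpleGraph (Fin (k + 1))) [DecidableRel F.Adj] (hFconn : F.Connected)
    (h : (Fin d → ℝ) → ℝ) (hmeas : Measurable h)
    (h01 : ∀ x, h x ∈ Set.Icc (0 : ℝ) 1)
    (heven : ∀ x, h (-x) = h x) (hint : Integrable h)
    (x₀ : Fin d → ℝ) :
    (∫ y : Fin k → Fin d → ℝ,
        ∏ p ∈ Finset.univ.filter
            (fun p : Fin (k + 1) × Fin (k + 1) => p.1 < p.2 ∧ F.Adj p.1 p.2),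
          h ((Fin.cons x₀ y : Fin (k + 1) → Fin d → ℝ) p.1
              - (Fin.cons x₀ y : Fin (k + 1) → Fin d → ℝ) p.2))
      ≤ (∫ x : Fin d → ℝ, h x) ^ k := by
  classical
  obtain ⟨e, he0, henum⟩ := exists_good_enum F hFconn
  set P : Fin (k+1) → Fin (k+1) := fun i =>
    if hi : i = 0 then 0 else Classical.choose (henum i hi) with hPdef
  have hP1 : ∀ i, i ≠ 0 → P i < i := by
    intro i hi
    simpa [hPdef, dif_neg hi] using (Classical.choose_spec (henum i hi)).1
  have hP2 : ∀ i, i ≠ 0 → F.Adj (e (P i)) (e i) := by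
    intro i hi
    simpa [hPdef, dif_neg hi] using (Classical.choose_spec (henum i hi)).2
  have hne : ∀ i : Fin k, e i.succ ≠ 0 := fun i hc =>
    (Fin.succ_ne_zero i) (e.injective (hc.trans he0.symm))
  have e'inj : Function.Injective (fun i : Fin k => (e i.succ).pred (hne i)) := by
    intro a b hab
    have h2 : e a.succ = e b.succ := by
      have h3 := congrArg Fin.succ hab
      rwa [Fin.succ_pred, Fin.succ_pred] at h3
    exact Fin.succ_injective _ (e.injective h2)
  set e' : Fin k ≃ Fin k :=
    Equiv.ofBijective _ (Finite.injective_iff_bijective.mp e'inj) with he'def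
  have he' : ∀ i : Fin k, e i.succ = (e' i).succ := by
    intro i
    have hh : e' i = (e i.succ).pred (hne i) := rfl
    rw [hh, Fin.succ_pred]
  set H : (Fin d → ℝ) → ENNReal := fun x => ENNReal.ofReal (h x) with hHdef
  have Hmeas : Measurable H := ENNReal.measurable_ofReal.comp hmeas
  have H1 : ∀ x, H x ≤ 1 := fun x => by
    rw [hHdef]; exact ENNReal.ofReal_le_one.mpr (h01 x).2
  have Heven : ∀ x, H (-x) = H x := fun x => by rw [hHdef]; simp [heven x]
  have hIe : ENNReal.ofReal (∫ x, h x) = ∫⁻ x, H x :=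
    MeasureTheory.ofReal_integral_eq_lintegral_ofReal hint
      (Filter.Eventually.of_forall fun x => (h01 x).1)
  have hIfin : (∫⁻ x, H x) ≠ ⊤ := by rw [← hIe]; exact ENNReal.ofReal_ne_top
  have hInonneg : (0:ℝ) ≤ ∫ x, h x := integral_nonneg fun x => (h01 x).1
  have fmeas : Measurable (fun y : Fin k → Fin d → ℝ =>
      ∏ p ∈ Finset.univ.filter
          (fun p : Fin (k + 1) × Fin (k + 1) => p.1 < p.2 ∧ F.Adj p.1 p.2),
        h ((Fin.cons x₀ y : Fin (k + 1) → Fin d → ℝ) p.1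
            - (Fin.cons x₀ y : Fin (k + 1) → Fin d → ℝ) p.2)) :=
    Finset.measurable_prod _ fun p _ =>
      hmeas.comp ((measurable_cons_apply x₀ p.1).sub (measurable_cons_apply x₀ p.2))
  have g'meas : Measurable (fun v : Fin k → Fin d → ℝ =>
      ∏ i ∈ Finset.univ.filter (fun i => i ≠ (0 : Fin (k + 1))),
        H ((Fin.cons x₀ v : Fin (k+1) → Fin d → ℝ) (P i)
            - (Fin.cons x₀ v : Fin (k+1) → Fin d → ℝ) i)) :=
    Finset.measurable_prod _ fun i _ =>
      Hmeas.comp ((measurable_cons_apply x₀ (P i)).sub (measurable_cons_apply x₀ i))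
  have step1 : (∫ y : Fin k → Fin d → ℝ,
        ∏ p ∈ Finset.univ.filter
            (fun p : Fin (k + 1) × Fin (k + 1) => p.1 < p.2 ∧ F.Adj p.1 p.2),
          h ((Fin.cons x₀ y : Fin (k + 1) → Fin d → ℝ) p.1
              - (Fin.cons x₀ y : Fin (k + 1) → Fin d → ℝ) p.2))
      = (∫⁻ y : Fin k → Fin d → ℝ,
          ∏ p ∈ Finset.univ.filter
              (fun p : Fin (k + 1) × Fin (k + 1) => p.1 < p.2 ∧ F.Adj p.1 p.2),
            H ((Fin.cons x₀ y : Fin (k + 1) → Fin d → ℝ) p.1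
                - (Fin.cons x₀ y : Fin (k + 1) → Fin d → ℝ) p.2)).toReal := by
    rw [MeasureTheory.integral_eq_lintegral_of_nonneg_ae
      (Filter.Eventually.of_forall fun y => Finset.prod_nonneg fun p _ => (h01 _).1)
      fmeas.aestronglyMeasurable]
    congr 1
    apply lintegral_congr
    intro y
    rw [ENNReal.ofReal_prod_of_nonneg fun p _ => (h01 _).1]
  have bound : (∫⁻ y : Fin k → Fin d → ℝ,
        ∏ p ∈ Finset.univ.filter
            (fun p : Fin (k + 1) × Fin (k + 1) => p.1 < p.2 ∧ F.Adj p.1 p.2),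
          H ((Fin.cons x₀ y : Fin (k + 1) → Fin d → ℝ) p.1
              - (Fin.cons x₀ y : Fin (k + 1) → Fin d → ℝ) p.2))
      ≤ (∫⁻ x, H x) ^ k := by
    have pt : ∀ w : Fin k → Fin d → ℝ,
        (∏ p ∈ Finset.univ.filter
            (fun p : Fin (k + 1) × Fin (k + 1) => p.1 < p.2 ∧ F.Adj p.1 p.2),
          H ((Fin.cons x₀ w : Fin (k + 1) → Fin d → ℝ) p.1
              - (Fin.cons x₀ w : Fin (k + 1) → Fin d → ℝ) p.2))
        ≤ ∏ i ∈ Finset.univ.filter (fun i => i ≠ (0 : Fin (k + 1))),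
            H ((Fin.cons x₀ (w ∘ e') : Fin (k+1) → Fin d → ℝ) (P i)
                - (Fin.cons x₀ (w ∘ e') : Fin (k+1) → Fin d → ℝ) i) := by
      intro w
      set Y : Fin (k+1) → Fin d → ℝ := Fin.cons x₀ w with hYdef
      have hWY : ∀ j : Fin (k+1),
          (Fin.cons x₀ (w ∘ e') : Fin (k+1) → Fin d → ℝ) j = Y (e j) := by
        intro j
        refine Fin.cases ?_ ?_ j
        · rw [he0]; simp [hYdef]
        · intro j
          rw [Fin.cons_succ, he' j, hYdef, Fin.cons_succ]
          rfl
      set σ : Fin (k+1) → Fin (k+1) × Fin (k+1) := fun i =>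
        if e (P i) < e i then (e (P i), e i) else (e i, e (P i)) with hσdef
      set t := (Finset.univ.filter (fun i => i ≠ (0 : Fin (k + 1)))).image σ with htdef
      have hsub : t ⊆ Finset.univ.filter
          (fun p : Fin (k + 1) × Fin (k + 1) => p.1 < p.2 ∧ F.Adj p.1 p.2) := by
        intro pr hpr
        rw [htdef, Finset.mem_image] at hpr
        obtain ⟨i, hi, rfl⟩ := hpr
        rw [Finset.mem_filter] at hi
        have hi0 : i ≠ 0 := hi.2
        rw [Finset.mem_filter]
        refine ⟨Finset.mem_univ _, ?_⟩
        simp only [hσdef]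
        by_cases hlt : e (P i) < e i
        · rw [if_pos hlt]; exact ⟨hlt, hP2 i hi0⟩
        · rw [if_neg hlt]
          have hnee : e i ≠ e (P i) := (hP2 i hi0).ne'
          exact ⟨lt_of_le_of_ne (not_lt.mp hlt) hnee, (hP2 i hi0).symm⟩
      calc (∏ p ∈ Finset.univ.filter
            (fun p : Fin (k + 1) × Fin (k + 1) => p.1 < p.2 ∧ F.Adj p.1 p.2),
          H ((Fin.cons x₀ w : Fin (k + 1) → Fin d → ℝ) p.1
              - (Fin.cons x₀ w : Fin (k + 1) → Fin d → ℝ) p.2))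
          ≤ ∏ p ∈ t, H (Y p.1 - Y p.2) := by
            rw [← Finset.prod_sdiff hsub]
            have hone : (∏ p ∈ (Finset.univ.filter
                (fun p : Fin (k + 1) × Fin (k + 1) => p.1 < p.2 ∧ F.Adj p.1 p.2)) \ t,
                H (Y p.1 - Y p.2)) ≤ 1 := Finset.prod_le_one' fun p _ => H1 _
            calc (∏ p ∈ (Finset.univ.filter
                (fun p : Fin (k + 1) × Fin (k + 1) => p.1 < p.2 ∧ F.Adj p.1 p.2)) \ t,
                H (Y p.1 - Y p.2)) * ∏ p ∈ t, H (Y p.1 - Y p.2)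
                ≤ 1 * ∏ p ∈ t, H (Y p.1 - Y p.2) := mul_le_mul_left hone _
              _ = ∏ p ∈ t, H (Y p.1 - Y p.2) := one_mul _
        _ = ∏ i ∈ Finset.univ.filter (fun i => i ≠ (0 : Fin (k + 1))),
              H (Y (σ i).1 - Y (σ i).2) := by
            rw [htdef]
            refine Finset.prod_image ?_
            intro i₁ h₁ i₂ h₂ heq
            rw [Finset.mem_coe, Finset.mem_filter] at h₁ h₂
            simp only [hσdef] at heq
            split_ifs at heq with c1 c2 c2 <;>
              rw [Prod.mk.injEq] at heq
            · exact e.injective heq.2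
            · exfalso
              have hi2 : P i₁ = i₂ := e.injective heq.1
              have hi1 : i₁ = P i₂ := e.injective heq.2
              have l1 := hP1 i₁ h₁.2
              have l2 := hP1 i₂ h₂.2
              rw [hi2] at l1
              rw [← hi1] at l2
              exact lt_asymm l1 l2
            · exfalso
              have hi2 : i₁ = P i₂ := e.injective heq.1
              have hi1 : P i₁ = i₂ := e.injective heq.2
              have l1 := hP1 i₁ h₁.2
              have l2 := hP1 i₂ h₂.2
              rw [hi1] at l1
              rw [← hi2] at l2
              exact lt_asymm l1 l2
            · exact e.injective heq.1
        _ = ∏ i ∈ Finset.univ.filter (fun i => i ≠ (0 : Fin (k + 1))),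
              H ((Fin.cons x₀ (w ∘ e') : Fin (k+1) → Fin d → ℝ) (P i)
                  - (Fin.cons x₀ (w ∘ e') : Fin (k+1) → Fin d → ℝ) i) := by
            refine Finset.prod_congr rfl ?_
            intro i _
            rw [hWY (P i), hWY i]
            simp only [hσdef]
            by_cases hlt : e (P i) < e i
            · rw [if_pos hlt]
            · rw [if_neg hlt]
              simp only []
              rw [← Heven (Y (e (P i)) - Y (e i)), neg_sub]
    have hT : ∀ w : Fin k → Fin d → ℝ,
        (MeasurableEquiv.piCongrLeft (fun _ : Fin k => (Fin d → ℝ)) e'.symm) w = w ∘ e' := by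
      intro w
      funext i
      rw [MeasurableEquiv.coe_piCongrLeft]
      have h2 := Equiv.piCongrLeft_apply_apply (P := fun _ : Fin k => (Fin d → ℝ))
        (e := e'.symm) w (e' i)
      rw [Equiv.symm_apply_apply] at h2
      exact h2
    calc (∫⁻ y : Fin k → Fin d → ℝ,
          ∏ p ∈ Finset.univ.filter
              (fun p : Fin (k + 1) × Fin (k + 1) => p.1 < p.2 ∧ F.Adj p.1 p.2),
            H ((Fin.cons x₀ y : Fin (k + 1) → Fin d → ℝ) p.1
                - (Fin.cons x₀ y : Fin (k + 1) → Fin d → ℝ) p.2))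
        ≤ ∫⁻ w : Fin k → Fin d → ℝ,
            ∏ i ∈ Finset.univ.filter (fun i => i ≠ (0 : Fin (k + 1))),
              H ((Fin.cons x₀ (w ∘ e') : Fin (k+1) → Fin d → ℝ) (P i)
                  - (Fin.cons x₀ (w ∘ e') : Fin (k+1) → Fin d → ℝ) i) :=
          lintegral_mono pt
      _ = ∫⁻ v : Fin k → Fin d → ℝ,
            ∏ i ∈ Finset.univ.filter (fun i => i ≠ (0 : Fin (k + 1))),
              H ((Fin.cons x₀ v : Fin (k+1) → Fin d → ℝ) (P i)
                  - (Fin.cons x₀ v : Fin (k+1) → Fin d → ℝ) i) := by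
          rw [← (volume_measurePreserving_piCongrLeft
            (fun _ : Fin k => (Fin d → ℝ)) e'.symm).lintegral_comp g'meas]
          apply lintegral_congr
          intro w
          rw [hT w]
      _ ≤ (∫⁻ x, H x) ^ k := tree_bound H Hmeas H1 Heven k P hP1 x₀
  rw [step1]
  calc (∫⁻ y : Fin k → Fin d → ℝ,
        ∏ p ∈ Finset.univ.filter
            (fun p : Fin (k + 1) × Fin (k + 1) => p.1 < p.2 ∧ F.Adj p.1 p.2),
          H ((Fin.cons x₀ y : Fin (k + 1) → Fin d → ℝ) p.1
              - (Fin.cons x₀ y : Fin (k + 1) → Fin d → ℝ) p.2)).toReal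
      ≤ ((∫⁻ x, H x) ^ k).toReal :=
        ENNReal.toReal_mono (ENNReal.pow_ne_top hIfin) bound
    _ = (∫ x : Fin d → ℝ, h x) ^ k := by
        rw [ENNReal.toReal_pow, ← hIe, ENNReal.toReal_ofReal hInonneg]
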